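/- Let r > 0 and let κ : ℝ → ℝ satisfy the hyperbolic regularity condition. Then (sinh² r)·K(s,t) − 2(sinh r)·H(s,t) + 1 = 0 for all s, t ∈ ℝ; that is, every regular tubular surface in hyperbolic 3-space is a linear Weingarten surface. -/

import Mathlib

theorem stmt_15 (r : ℝ) (hr : 0 < r) (κ : ℝ → ℝ)
    (hreg : ∀ s t : ℝ, Real.cosh r - κ s * Real.cos t * Real.sinh r ≠ 0) (s t : ℝ) :
    Real.sinh r ^ 2 *
        (-(κ s * Real.cos t) /
          ((Real.cosh r - κ s * Real.cos t * Real.sinh r) * Real.sinh r)) -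
      2 * Real.sinh r *
        ((Real.cosh r - 2 * κ s * Real.cos t * Real.sinh r) /
          (2 * (Real.cosh r - κ s * Real.cos t * Real.sinh r) * Real.sinh r)) + 1 = 0 := by
  have hs : Real.sinh r ≠ 0 := Real.sinh_ne_zero.2 hr.ne'
  have hx := hreg s t
  field_simp
  rw [div_add_one (by rwa [show Real.sinh r * κ s * Real.cos t = κ s * Real.cos t * Real.sinh r by ring]), div_eq_zero_iff]
  left
  ring
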